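/- (Variance of the efficient influence function.) The second-moment matrix of D* satisfies E_P[D*(O) D*(O)^⊤] = G⁻¹ E_P[ ( σ²(A,X)/g(A,X)² + (Ψ(X) − β₀^⊤ v(X))² ) v(X) v(X)^⊤ ] G⁻¹, where g(A,X) := 𝟙{A=1} g(1,X) + 𝟙{A=0} g(0,X). -/

import Mathlib

open MeasureTheory Matrix

section Aux
set_option linter.unusedSectionVars false

lemma aux_int {Ω : Type*} {_mΩ : MeasurableSpace Ω} {P : Measure Ω} [IsFiniteMeasure P]
    {f : Ω → ℝ} (hf : AEStronglyMeasurable f P)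
    (hb : ∃ C, ∀ᵐ ω ∂P, |f ω| ≤ C) : Integrable f P := by
  obtain ⟨C, hC⟩ := hb
  exact Integrable.mono' (integrable_const C) hf (by simpa [Real.norm_eq_abs] using hC)

lemma aux_bdd_mul {Ω : Type*} {_mΩ : MeasurableSpace Ω} {P : Measure Ω}
    {f g : Ω → ℝ} (hf : ∃ C, ∀ᵐ ω ∂P, |f ω| ≤ C)
    (hg : ∃ C, ∀ᵐ ω ∂P, |g ω| ≤ C) : ∃ C, ∀ᵐ ω ∂P, |f ω * g ω| ≤ C := by
  obtain ⟨C1, h1⟩ := hf; obtain ⟨C2, h2⟩ := hg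
  refine ⟨|C1| * |C2|, ?_⟩
  filter_upwards [h1, h2] with ω hω1 hω2
  rw [abs_mul]
  exact mul_le_mul (hω1.trans (le_abs_self _)) (hω2.trans (le_abs_self _)) (abs_nonneg _)
    (abs_nonneg _)

lemma aux_bdd_add {Ω : Type*} {_mΩ : MeasurableSpace Ω} {P : Measure Ω}
    {f g : Ω → ℝ} (hf : ∃ C, ∀ᵐ ω ∂P, |f ω| ≤ C)
    (hg : ∃ C, ∀ᵐ ω ∂P, |g ω| ≤ C) : ∃ C, ∀ᵐ ω ∂P, |f ω + g ω| ≤ C := by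
  obtain ⟨C1, h1⟩ := hf; obtain ⟨C2, h2⟩ := hg
  refine ⟨C1 + C2, ?_⟩
  filter_upwards [h1, h2] with ω hω1 hω2
  exact (abs_add_le _ _).trans (add_le_add hω1 hω2)

lemma aux_bdd_sub {Ω : Type*} {_mΩ : MeasurableSpace Ω} {P : Measure Ω}
    {f g : Ω → ℝ} (hf : ∃ C, ∀ᵐ ω ∂P, |f ω| ≤ C)
    (hg : ∃ C, ∀ᵐ ω ∂P, |g ω| ≤ C) : ∃ C, ∀ᵐ ω ∂P, |f ω - g ω| ≤ C := by
  obtain ⟨C1, h1⟩ := hf; obtain ⟨C2, h2⟩ := hg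
  refine ⟨C1 + C2, ?_⟩
  filter_upwards [h1, h2] with ω hω1 hω2
  exact (abs_sub _ _).trans (add_le_add hω1 hω2)

lemma aux_bdd_div {Ω : Type*} {_mΩ : MeasurableSpace Ω} {P : Measure Ω} {f g : Ω → ℝ} {δ : ℝ}
    (hδ : 0 < δ) (hf : ∃ C, ∀ᵐ ω ∂P, |f ω| ≤ C) (hg : ∀ᵐ ω ∂P, δ ≤ g ω) :
    ∃ C, ∀ᵐ ω ∂P, |f ω / g ω| ≤ C := by
  obtain ⟨C, hC⟩ := hf
  refine ⟨max C 0 / δ, ?_⟩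
  filter_upwards [hC, hg] with ω h1 h2
  rw [abs_div, abs_of_pos (hδ.trans_le h2)]
  exact div_le_div₀ (le_max_right C 0) (h1.trans (le_max_left C 0)) hδ h2

lemma aux_bdd_sq {Ω : Type*} {_mΩ : MeasurableSpace Ω} {P : Measure Ω} {f : Ω → ℝ}
    (hf : ∃ C, ∀ᵐ ω ∂P, |f ω| ≤ C) : ∃ C, ∀ᵐ ω ∂P, |f ω ^ 2| ≤ C := by
  obtain ⟨C, hC⟩ := aux_bdd_mul hf hf
  exact ⟨C, hC.mono fun ω h => by rw [pow_two]; exact h⟩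

lemma aux_bdd_condexp {Ω : Type*} {mX m0 : MeasurableSpace Ω} {P : Measure Ω} {f : Ω → ℝ}
    (hf : ∃ C, ∀ᵐ ω ∂P, |f ω| ≤ C) : ∃ C, ∀ᵐ ω ∂P, |(P[f|mX]) ω| ≤ C := by
  obtain ⟨C, hC⟩ := hf
  refine ⟨((⟨max C 0, le_max_right C 0⟩ : NNReal) : ℝ), ae_bdd_condExp_of_ae_bdd ?_⟩
  filter_upwards [hC] with ω h
  exact h.trans (le_max_left C 0)

/-- Master lemma: test a bounded function against a sub-σ-algebra-measurable bounded factor. -/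
lemma aux_master {Ω : Type*} {mX : MeasurableSpace Ω} {m0 : MeasurableSpace Ω}
    {P : Measure Ω} [IsProbabilityMeasure P] (hm : mX ≤ m0)
    {F Z : Ω → ℝ} (hF : Measurable[mX] F) (hFb : ∃ C, ∀ᵐ ω ∂P, |F ω| ≤ C)
    (hZ : AEStronglyMeasurable Z P) (hZb : ∃ C, ∀ᵐ ω ∂P, |Z ω| ≤ C) :
    ∫ ω, F ω * Z ω ∂P = ∫ ω, F ω * (P[Z|mX]) ω ∂P := by
  have hZint : Integrable Z P := aux_int hZ hZb
  have hFZint : Integrable (F * Z) P :=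
    aux_int (((hF.mono hm le_rfl).aestronglyMeasurable).mul hZ) (aux_bdd_mul hFb hZb)
  have h1 : P[F * Z|mX] =ᵐ[P] F * P[Z|mX] :=
    condExp_mul_of_stronglyMeasurable_left hF.stronglyMeasurable hFZint hZint
  calc ∫ ω, F ω * Z ω ∂P = ∫ ω, (P[F * Z|mX]) ω ∂P := (integral_condExp hm).symm
    _ = ∫ ω, F ω * (P[Z|mX]) ω ∂P := integral_congr_ae h1

lemma aux_split7 {Ω : Type*} {_mΩ : MeasurableSpace Ω} {P : Measure Ω}
    {f1 f2 f3 f4 f5 f6 f7 : Ω → ℝ}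
    (h1 : Integrable f1 P) (h2 : Integrable f2 P) (h3 : Integrable f3 P)
    (h4 : Integrable f4 P) (h5 : Integrable f5 P) (h6 : Integrable f6 P)
    (h7 : Integrable f7 P) :
    ∫ ω, (f1 ω + f2 ω + 2 * f3 ω - 2 * f4 ω - 2 * f5 ω + 2 * f6 ω + f7 ω) ∂P
      = ∫ ω, f1 ω ∂P + ∫ ω, f2 ω ∂P + 2 * ∫ ω, f3 ω ∂P - 2 * ∫ ω, f4 ω ∂P
        - 2 * ∫ ω, f5 ω ∂P + 2 * ∫ ω, f6 ω ∂P + ∫ ω, f7 ω ∂P := by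
  have h3' : Integrable (fun ω => 2 * f3 ω) P := h3.const_mul 2
  have h4' : Integrable (fun ω => 2 * f4 ω) P := h4.const_mul 2
  have h5' : Integrable (fun ω => 2 * f5 ω) P := h5.const_mul 2
  have h6' : Integrable (fun ω => 2 * f6 ω) P := h6.const_mul 2
  calc ∫ ω, (f1 ω + f2 ω + 2 * f3 ω - 2 * f4 ω - 2 * f5 ω + 2 * f6 ω + f7 ω) ∂P
      = ∫ ω, (f1 ω + f2 ω + 2 * f3 ω - 2 * f4 ω - 2 * f5 ω + 2 * f6 ω) ∂P
        + ∫ ω, f7 ω ∂P :=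
        integral_add (((((h1.add h2).add h3').sub h4').sub h5').add h6') h7
    _ = (∫ ω, (f1 ω + f2 ω + 2 * f3 ω - 2 * f4 ω - 2 * f5 ω) ∂P + ∫ ω, 2 * f6 ω ∂P)
        + ∫ ω, f7 ω ∂P :=
        congrArg (fun t => t + ∫ ω, f7 ω ∂P)
          (integral_add ((((h1.add h2).add h3').sub h4').sub h5') h6')
    _ = ((∫ ω, (f1 ω + f2 ω + 2 * f3 ω - 2 * f4 ω) ∂P - ∫ ω, 2 * f5 ω ∂P) + ∫ ω, 2 * f6 ω ∂P)
        + ∫ ω, f7 ω ∂P :=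
        congrArg (fun t => t + ∫ ω, 2 * f6 ω ∂P + ∫ ω, f7 ω ∂P)
          (integral_sub (((h1.add h2).add h3').sub h4') h5')
    _ = (((∫ ω, (f1 ω + f2 ω + 2 * f3 ω) ∂P - ∫ ω, 2 * f4 ω ∂P) - ∫ ω, 2 * f5 ω ∂P)
        + ∫ ω, 2 * f6 ω ∂P) + ∫ ω, f7 ω ∂P :=
        congrArg (fun t => t - ∫ ω, 2 * f5 ω ∂P + ∫ ω, 2 * f6 ω ∂P + ∫ ω, f7 ω ∂P)
          (integral_sub ((h1.add h2).add h3') h4')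
    _ = ((((∫ ω, (f1 ω + f2 ω) ∂P + ∫ ω, 2 * f3 ω ∂P) - ∫ ω, 2 * f4 ω ∂P)
        - ∫ ω, 2 * f5 ω ∂P) + ∫ ω, 2 * f6 ω ∂P) + ∫ ω, f7 ω ∂P :=
        congrArg (fun t => t - ∫ ω, 2 * f4 ω ∂P - ∫ ω, 2 * f5 ω ∂P + ∫ ω, 2 * f6 ω ∂P
          + ∫ ω, f7 ω ∂P) (integral_add (h1.add h2) h3')
    _ = ∫ ω, f1 ω ∂P + ∫ ω, f2 ω ∂P + 2 * ∫ ω, f3 ω ∂P - 2 * ∫ ω, f4 ω ∂P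
        - 2 * ∫ ω, f5 ω ∂P + 2 * ∫ ω, f6 ω ∂P + ∫ ω, f7 ω ∂P := by
        rw [integral_add h1 h2]
        simp only [integral_const_mul]

lemma aux_split3 {Ω : Type*} {_mΩ : MeasurableSpace Ω} {P : Measure Ω}
    {f1 f2 f3 : Ω → ℝ}
    (h1 : Integrable f1 P) (h2 : Integrable f2 P) (h3 : Integrable f3 P) :
    ∫ ω, (f1 ω + f2 ω + f3 ω) ∂P = ∫ ω, f1 ω ∂P + ∫ ω, f2 ω ∂P + ∫ ω, f3 ω ∂P := by
  calc ∫ ω, (f1 ω + f2 ω + f3 ω) ∂P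
      = ∫ ω, (f1 ω + f2 ω) ∂P + ∫ ω, f3 ω ∂P := integral_add (h1.add h2) h3
    _ = ∫ ω, f1 ω ∂P + ∫ ω, f2 ω ∂P + ∫ ω, f3 ω ∂P := by rw [integral_add h1 h2]

end Aux

theorem stmt_11
    {Ω 𝒳 : Type*} [MeasurableSpace Ω] [MeasurableSpace 𝒳]
    (P : Measure Ω) [IsProbabilityMeasure P]
    (X : Ω → 𝒳) (hX : Measurable X)
    (A : Ω → Bool) (hA : Measurable A)
    (Y : Ω → ℝ) (hYm : Measurable Y) (hYb : ∃ C, ∀ ω, |Y ω| ≤ C)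
    (mX : MeasurableSpace Ω) (hmX : mX = MeasurableSpace.comap X inferInstance)
    (g : Bool → Ω → ℝ) (hgm : ∀ a, Measurable[mX] (g a))
    (hgv : ∀ a, g a =ᵐ[P] P[fun ω => if A ω = a then (1:ℝ) else 0|mX])
    (δ : ℝ) (hδ : 0 < δ) (hgb : ∀ a, ∀ᵐ ω ∂P, δ ≤ g a ω ∧ g a ω ≤ 1 - δ)
    (Qbar : Bool → Ω → ℝ)
    (hQbar : ∀ a ω, Qbar a ω
      = (P[fun ω' => (if A ω' = a then (1:ℝ) else 0) * Y ω'|mX]) ω / g a ω)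
    (Ψ : Ω → ℝ) (hΨ : ∀ ω, Ψ ω = Qbar true ω - Qbar false ω)
    (QbarA : Ω → ℝ)
    (hQbarA : ∀ ω, QbarA ω
      = (if A ω = true then (1:ℝ) else 0) * Qbar true ω
        + (if A ω = false then (1:ℝ) else 0) * Qbar false ω)
    (gA : Ω → ℝ)
    (hgA : ∀ ω, gA ω
      = (if A ω = true then (1:ℝ) else 0) * g true ω
        + (if A ω = false then (1:ℝ) else 0) * g false ω)
    (Δstar : Ω → ℝ)
    (hΔstar : ∀ ω, Δstar ω
      = ((if A ω = true then (1:ℝ) else 0) / g true ω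
          - (if A ω = false then (1:ℝ) else 0) / g false ω) * (Y ω - QbarA ω))
    (σ2 : Bool → Ω → ℝ)
    (hσ2 : ∀ a ω, σ2 a ω
      = (P[fun ω' => (if A ω' = a then (1:ℝ) else 0) * (Y ω' - Qbar a ω') ^ 2|mX]) ω / g a ω)
    (σ2A : Ω → ℝ)
    (hσ2A : ∀ ω, σ2A ω
      = (if A ω = true then (1:ℝ) else 0) * σ2 true ω
        + (if A ω = false then (1:ℝ) else 0) * σ2 false ω)
    {p : ℕ} (v : 𝒳 → Fin p → ℝ) (hvm : Measurable v) (hvb : ∃ C, ∀ x i, |v x i| ≤ C)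
    (G : Matrix (Fin p) (Fin p) ℝ)
    (hG : G = Matrix.of fun i j => ∫ ω, v (X ω) i * v (X ω) j ∂P)
    (hGunit : IsUnit G)
    (β₀ : Fin p → ℝ) (hβ₀ : β₀ = G⁻¹ *ᵥ fun i => ∫ ω, Ψ ω * v (X ω) i ∂P)
    (Dstar : Ω → Fin p → ℝ)
    (hDstar : ∀ ω, Dstar ω
      = G⁻¹ *ᵥ fun i => (Δstar ω + Ψ ω - β₀ ⬝ᵥ v (X ω)) * v (X ω) i) :
    (Matrix.of fun i j => ∫ ω, Dstar ω i * Dstar ω j ∂P)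
      = G⁻¹ *
        (Matrix.of fun i j =>
          ∫ ω, (σ2A ω / gA ω ^ 2 + (Ψ ω - β₀ ⬝ᵥ v (X ω)) ^ 2) * (v (X ω) i * v (X ω) j) ∂P) *
        G⁻¹ := by
  rename_i mΩ m𝒳 hPP
  -- basic measurability structure
  have hm : mX ≤ mΩ := by rw [hmX]; exact hX.comap_le
  have hXmX : Measurable[mX] X := by rw [hmX]; exact Measurable.of_comap_le le_rfl
  have hvmX : ∀ i, Measurable[mX] fun ω => v (X ω) i :=
    fun i => ((measurable_pi_apply i).comp hvm).comp hXmX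
  have hQmX : ∀ a, Measurable[mX] (Qbar a) := by
    intro a
    have : Qbar a = fun ω =>
        (P[fun ω' => (if A ω' = a then (1:ℝ) else 0) * Y ω'|mX]) ω / g a ω :=
      funext (hQbar a)
    rw [this]
    exact stronglyMeasurable_condExp.measurable.div (hgm a)
  have hσmX : ∀ a, Measurable[mX] (σ2 a) := by
    intro a
    have : σ2 a = fun ω =>
        (P[fun ω' => (if A ω' = a then (1:ℝ) else 0) * (Y ω' - Qbar a ω') ^ 2|mX]) ω / g a ω :=
      funext (hσ2 a)
    rw [this]
    exact stronglyMeasurable_condExp.measurable.div (hgm a)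
  have hΨmX : Measurable[mX] Ψ := by
    rw [funext hΨ]; exact (hQmX true).sub (hQmX false)
  have hdotmX : Measurable[mX] fun ω => β₀ ⬝ᵥ v (X ω) := by
    simp only [dotProduct]
    exact Finset.measurable_sum _ fun i _ => measurable_const.mul (hvmX i)
  -- ambient measurability
  have mI : ∀ a : Bool, Measurable[mΩ] fun ω => (if A ω = a then (1:ℝ) else 0) :=
    fun a => Measurable.ite (hA (measurableSet_singleton a)) measurable_const measurable_const
  have mQbarA : Measurable[mΩ] QbarA := by
    rw [funext hQbarA]
    exact ((mI true).mul ((hQmX true).mono hm le_rfl)).add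
      ((mI false).mul ((hQmX false).mono hm le_rfl))
  have mΔ : Measurable[mΩ] Δstar := by
    rw [funext hΔstar]
    exact (((mI true).div ((hgm true).mono hm le_rfl)).sub
      ((mI false).div ((hgm false).mono hm le_rfl))).mul (hYm.sub mQbarA)
  -- a.e. bounds
  obtain ⟨CY, hCY⟩ := hYb
  obtain ⟨Cv, hCv⟩ := hvb
  have hgae : ∀ a, ∀ᵐ ω ∂P, δ ≤ g a ω := fun a => (hgb a).mono fun ω h => h.1
  have hgne : ∀ a, ∀ᵐ ω ∂P, g a ω ≠ 0 :=
    fun a => (hgae a).mono fun ω h => ne_of_gt (hδ.trans_le h)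
  have hδsq : 0 < δ ^ 2 := pow_pos hδ 2
  have hgsq : ∀ a, ∀ᵐ ω ∂P, δ ^ 2 ≤ g a ω ^ 2 :=
    fun a => (hgae a).mono fun ω h => pow_le_pow_left₀ hδ.le h 2
  have bY : ∃ C, ∀ᵐ ω ∂P, |Y ω| ≤ C := ⟨CY, Filter.Eventually.of_forall hCY⟩
  have bI : ∀ a : Bool, ∃ C, ∀ᵐ ω ∂P, |(if A ω = a then (1:ℝ) else 0)| ≤ C := by
    intro a
    refine ⟨1, Filter.Eventually.of_forall fun ω => ?_⟩
    split <;> simp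
  have bv : ∀ i, ∃ C, ∀ᵐ ω ∂P, |v (X ω) i| ≤ C :=
    fun i => ⟨Cv, Filter.Eventually.of_forall fun ω => hCv (X ω) i⟩
  have bg : ∀ a, ∃ C, ∀ᵐ ω ∂P, |g a ω| ≤ C := by
    intro a
    refine ⟨1, (hgb a).mono fun ω h => abs_le.mpr ⟨?_, ?_⟩⟩ <;> [linarith [h.1]; linarith [h.2]]
  have bQ : ∀ a, ∃ C, ∀ᵐ ω ∂P, |Qbar a ω| ≤ C := by
    intro a
    obtain ⟨C, hC⟩ := aux_bdd_div (P := P) hδ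
      (aux_bdd_condexp (mX := mX) (aux_bdd_mul (bI a) bY)) (hgae a)
    exact ⟨C, hC.mono fun ω h => by rw [hQbar a ω]; exact h⟩
  have bσ : ∀ a, ∃ C, ∀ᵐ ω ∂P, |σ2 a ω| ≤ C := by
    intro a
    obtain ⟨C, hC⟩ := aux_bdd_div (P := P) hδ
      (aux_bdd_condexp (mX := mX) (aux_bdd_mul (bI a) (aux_bdd_sq (aux_bdd_sub bY (bQ a)))))
      (hgae a)
    exact ⟨C, hC.mono fun ω h => by rw [hσ2 a ω]; exact h⟩
  have bΨ : ∃ C, ∀ᵐ ω ∂P, |Ψ ω| ≤ C := by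
    obtain ⟨C, hC⟩ := aux_bdd_sub (bQ true) (bQ false)
    exact ⟨C, hC.mono fun ω h => by rw [hΨ ω]; exact h⟩
  have bdot : ∃ C, ∀ᵐ ω ∂P, |β₀ ⬝ᵥ v (X ω)| ≤ C := by
    refine ⟨∑ i, |β₀ i| * Cv, Filter.Eventually.of_forall fun ω => ?_⟩
    refine (Finset.abs_sum_le_sum_abs _ _).trans (Finset.sum_le_sum fun i _ => ?_)
    rw [abs_mul]
    exact mul_le_mul_of_nonneg_left (hCv (X ω) i) (abs_nonneg _)
  have bh : ∃ C, ∀ᵐ ω ∂P, |Ψ ω - β₀ ⬝ᵥ v (X ω)| ≤ C := aux_bdd_sub bΨ bdot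
  have bQbarA : ∃ C, ∀ᵐ ω ∂P, |QbarA ω| ≤ C := by
    obtain ⟨C, hC⟩ := aux_bdd_add (aux_bdd_mul (bI true) (bQ true))
      (aux_bdd_mul (bI false) (bQ false))
    exact ⟨C, hC.mono fun ω h => by rw [hQbarA ω]; exact h⟩
  have bΔ : ∃ C, ∀ᵐ ω ∂P, |Δstar ω| ≤ C := by
    obtain ⟨C, hC⟩ := aux_bdd_mul
      (aux_bdd_sub (aux_bdd_div (P := P) hδ (bI true) (hgae true))
        (aux_bdd_div (P := P) hδ (bI false) (hgae false)))
      (aux_bdd_sub bY bQbarA)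
    exact ⟨C, hC.mono fun ω h => by rw [hΔstar ω]; exact h⟩
  have bc : ∃ C, ∀ᵐ ω ∂P, |Δstar ω + Ψ ω - β₀ ⬝ᵥ v (X ω)| ≤ C :=
    aux_bdd_sub (aux_bdd_add bΔ bΨ) bdot
  -- conditional expectation identities
  have hcQ : ∀ a, (P[fun ω' => (if A ω' = a then (1:ℝ) else 0) * Y ω'|mX])
      =ᵐ[P] fun ω => Qbar a ω * g a ω := by
    intro a
    filter_upwards [hgne a] with ω hω
    rw [hQbar a ω, div_mul_cancel₀ _ hω]
  have hcσ : ∀ a, (P[fun ω' => (if A ω' = a then (1:ℝ) else 0) * (Y ω' - Qbar a ω') ^ 2|mX])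
      =ᵐ[P] fun ω => σ2 a ω * g a ω := by
    intro a
    filter_upwards [hgne a] with ω hω
    rw [hσ2 a ω, div_mul_cancel₀ _ hω]
  -- the key per-entry identity
  have key : ∀ k l : Fin p,
      ∫ ω, (Δstar ω + Ψ ω - β₀ ⬝ᵥ v (X ω)) ^ 2 * (v (X ω) k * v (X ω) l) ∂P
        = ∫ ω, (σ2A ω / gA ω ^ 2 + (Ψ ω - β₀ ⬝ᵥ v (X ω)) ^ 2) * (v (X ω) k * v (X ω) l) ∂P := by
    intro k l
    have hwmX : Measurable[mX] fun ω => v (X ω) k * v (X ω) l := (hvmX k).mul (hvmX l)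
    have bw : ∃ C, ∀ᵐ ω ∂P, |v (X ω) k * v (X ω) l| ≤ C := aux_bdd_mul (bv k) (bv l)
    -- S: second moment terms
    have Sa : ∀ a : Bool,
        ∫ ω, (v (X ω) k * v (X ω) l / g a ω ^ 2)
            * ((if A ω = a then (1:ℝ) else 0) * (Y ω - Qbar a ω) ^ 2) ∂P
          = ∫ ω, (v (X ω) k * v (X ω) l * σ2 a ω / g a ω ^ 2) * g a ω ∂P := by
      intro a
      have hF : Measurable[mX] fun ω => v (X ω) k * v (X ω) l / g a ω ^ 2 :=
        hwmX.div ((hgm a).pow_const 2)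
      have hFb := aux_bdd_div (P := P) hδsq bw (hgsq a)
      have hZ : AEStronglyMeasurable[mΩ]
          (fun ω => (if A ω = a then (1:ℝ) else 0) * (Y ω - Qbar a ω) ^ 2) P :=
        ((mI a).mul ((hYm.sub ((hQmX a).mono hm le_rfl)).pow_const 2)).aestronglyMeasurable
      have hZb := aux_bdd_mul (bI a) (aux_bdd_sq (aux_bdd_sub bY (bQ a)))
      calc ∫ ω, (v (X ω) k * v (X ω) l / g a ω ^ 2)
              * ((if A ω = a then (1:ℝ) else 0) * (Y ω - Qbar a ω) ^ 2) ∂P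
          = ∫ ω, (v (X ω) k * v (X ω) l / g a ω ^ 2)
              * (P[fun ω' => (if A ω' = a then (1:ℝ) else 0) * (Y ω' - Qbar a ω') ^ 2|mX]) ω ∂P :=
            aux_master hm hF hFb hZ hZb
        _ = ∫ ω, (v (X ω) k * v (X ω) l / g a ω ^ 2) * (σ2 a ω * g a ω) ∂P := by
            refine integral_congr_ae ?_
            filter_upwards [hcσ a] with ω hω
            rw [hω]
        _ = ∫ ω, (v (X ω) k * v (X ω) l * σ2 a ω / g a ω ^ 2) * g a ω ∂P :=
            integral_congr_ae (Filter.Eventually.of_forall fun ω => by ring)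
    -- T: the σ2A side terms
    have Ta : ∀ a : Bool,
        ∫ ω, (v (X ω) k * v (X ω) l * σ2 a ω / g a ω ^ 2)
            * (if A ω = a then (1:ℝ) else 0) ∂P
          = ∫ ω, (v (X ω) k * v (X ω) l * σ2 a ω / g a ω ^ 2) * g a ω ∂P := by
      intro a
      have hF : Measurable[mX] fun ω => v (X ω) k * v (X ω) l * σ2 a ω / g a ω ^ 2 :=
        (hwmX.mul (hσmX a)).div ((hgm a).pow_const 2)
      have hFb := aux_bdd_div (P := P) hδsq (aux_bdd_mul bw (bσ a)) (hgsq a)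
      calc ∫ ω, (v (X ω) k * v (X ω) l * σ2 a ω / g a ω ^ 2)
              * (if A ω = a then (1:ℝ) else 0) ∂P
          = ∫ ω, (v (X ω) k * v (X ω) l * σ2 a ω / g a ω ^ 2)
              * (P[fun ω => if A ω = a then (1:ℝ) else 0|mX]) ω ∂P :=
            aux_master hm hF hFb ((mI a).aestronglyMeasurable) (bI a)
        _ = ∫ ω, (v (X ω) k * v (X ω) l * σ2 a ω / g a ω ^ 2) * g a ω ∂P := by
            refine integral_congr_ae ?_
            filter_upwards [hgv a] with ω hω
            rw [← hω]
    -- B: cross terms vanish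
    have Ba : ∀ a : Bool,
        ∫ ω, (v (X ω) k * v (X ω) l * (Ψ ω - β₀ ⬝ᵥ v (X ω)) / g a ω)
            * ((if A ω = a then (1:ℝ) else 0) * Y ω) ∂P
          = ∫ ω, (v (X ω) k * v (X ω) l * (Ψ ω - β₀ ⬝ᵥ v (X ω)) * Qbar a ω / g a ω)
            * (if A ω = a then (1:ℝ) else 0) ∂P := by
      intro a
      have hF1 : Measurable[mX] fun ω =>
          v (X ω) k * v (X ω) l * (Ψ ω - β₀ ⬝ᵥ v (X ω)) / g a ω :=
        (hwmX.mul (hΨmX.sub hdotmX)).div (hgm a)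
      have hF1b := aux_bdd_div (P := P) hδ (aux_bdd_mul bw bh) (hgae a)
      have hF2 : Measurable[mX] fun ω =>
          v (X ω) k * v (X ω) l * (Ψ ω - β₀ ⬝ᵥ v (X ω)) * Qbar a ω / g a ω :=
        ((hwmX.mul (hΨmX.sub hdotmX)).mul (hQmX a)).div (hgm a)
      have hF2b := aux_bdd_div (P := P) hδ (aux_bdd_mul (aux_bdd_mul bw bh) (bQ a)) (hgae a)
      have h1 : ∫ ω, (v (X ω) k * v (X ω) l * (Ψ ω - β₀ ⬝ᵥ v (X ω)) / g a ω)
            * ((if A ω = a then (1:ℝ) else 0) * Y ω) ∂P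
          = ∫ ω, (v (X ω) k * v (X ω) l * (Ψ ω - β₀ ⬝ᵥ v (X ω)) / g a ω)
            * (Qbar a ω * g a ω) ∂P := by
        rw [aux_master (Z := fun ω => (if A ω = a then (1:ℝ) else 0) * Y ω) hm hF1 hF1b ((mI a).mul hYm).aestronglyMeasurable
          (aux_bdd_mul (bI a) bY)]
        refine integral_congr_ae ?_
        filter_upwards [hcQ a] with ω hω
        rw [hω]
      have h2 : ∫ ω, (v (X ω) k * v (X ω) l * (Ψ ω - β₀ ⬝ᵥ v (X ω)) * Qbar a ω / g a ω)
            * (if A ω = a then (1:ℝ) else 0) ∂P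
          = ∫ ω, (v (X ω) k * v (X ω) l * (Ψ ω - β₀ ⬝ᵥ v (X ω)) / g a ω)
            * (Qbar a ω * g a ω) ∂P := by
        rw [aux_master hm hF2 hF2b ((mI a).aestronglyMeasurable) (bI a)]
        refine integral_congr_ae ?_
        filter_upwards [hgv a] with ω hω
        rw [← hω]; ring
      rw [h1, h2]
    -- integrability of all pieces
    have I1 : Integrable (fun ω => (v (X ω) k * v (X ω) l / g true ω ^ 2)
        * ((if A ω = true then (1:ℝ) else 0) * (Y ω - Qbar true ω) ^ 2)) P :=
      aux_int (((hwmX.div ((hgm true).pow_const 2)).mono hm le_rfl).mul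
          ((mI true).mul ((hYm.sub ((hQmX true).mono hm le_rfl)).pow_const 2))).aestronglyMeasurable
        (aux_bdd_mul (aux_bdd_div (P := P) hδsq bw (hgsq true))
          (aux_bdd_mul (bI true) (aux_bdd_sq (aux_bdd_sub bY (bQ true)))))
    have I2 : Integrable (fun ω => (v (X ω) k * v (X ω) l / g false ω ^ 2)
        * ((if A ω = false then (1:ℝ) else 0) * (Y ω - Qbar false ω) ^ 2)) P :=
      aux_int (((hwmX.div ((hgm false).pow_const 2)).mono hm le_rfl).mul
          ((mI false).mul ((hYm.sub ((hQmX false).mono hm le_rfl)).pow_const 2))).aestronglyMeasurable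
        (aux_bdd_mul (aux_bdd_div (P := P) hδsq bw (hgsq false))
          (aux_bdd_mul (bI false) (aux_bdd_sq (aux_bdd_sub bY (bQ false)))))
    have I3 : ∀ a : Bool, Integrable (fun ω =>
        (v (X ω) k * v (X ω) l * (Ψ ω - β₀ ⬝ᵥ v (X ω)) / g a ω)
          * ((if A ω = a then (1:ℝ) else 0) * Y ω)) P := fun a =>
      aux_int (((((hwmX.mul (hΨmX.sub hdotmX)).div (hgm a)).mono hm le_rfl)).mul
          ((mI a).mul hYm)).aestronglyMeasurable
        (aux_bdd_mul (aux_bdd_div (P := P) hδ (aux_bdd_mul bw bh) (hgae a))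
          (aux_bdd_mul (bI a) bY))
    have I4 : ∀ a : Bool, Integrable (fun ω =>
        (v (X ω) k * v (X ω) l * (Ψ ω - β₀ ⬝ᵥ v (X ω)) * Qbar a ω / g a ω)
          * (if A ω = a then (1:ℝ) else 0)) P := fun a =>
      aux_int ((((((hwmX.mul (hΨmX.sub hdotmX)).mul (hQmX a)).div (hgm a)).mono hm le_rfl)).mul
          (mI a)).aestronglyMeasurable
        (aux_bdd_mul (aux_bdd_div (P := P) hδ (aux_bdd_mul (aux_bdd_mul bw bh) (bQ a)) (hgae a))
          (bI a))
    have I7 : Integrable (fun ω =>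
        (Ψ ω - β₀ ⬝ᵥ v (X ω)) ^ 2 * (v (X ω) k * v (X ω) l)) P :=
      aux_int ((((hΨmX.sub hdotmX).pow_const 2).mul hwmX).mono hm le_rfl).aestronglyMeasurable
        (aux_bdd_mul (aux_bdd_sq bh) bw)
    have I8 : ∀ a : Bool, Integrable (fun ω =>
        (v (X ω) k * v (X ω) l * σ2 a ω / g a ω ^ 2)
          * (if A ω = a then (1:ℝ) else 0)) P := fun a =>
      aux_int (((((hwmX.mul (hσmX a)).div ((hgm a).pow_const 2)).mono hm le_rfl)).mul
          (mI a)).aestronglyMeasurable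
        (aux_bdd_mul (aux_bdd_div (P := P) hδsq (aux_bdd_mul bw (bσ a)) (hgsq a)) (bI a))
    -- pointwise decomposition of the LHS
    have hpt : ∀ ω, (Δstar ω + Ψ ω - β₀ ⬝ᵥ v (X ω)) ^ 2 * (v (X ω) k * v (X ω) l)
        = (v (X ω) k * v (X ω) l / g true ω ^ 2)
            * ((if A ω = true then (1:ℝ) else 0) * (Y ω - Qbar true ω) ^ 2)
          + (v (X ω) k * v (X ω) l / g false ω ^ 2)
            * ((if A ω = false then (1:ℝ) else 0) * (Y ω - Qbar false ω) ^ 2)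
          + 2 * ((v (X ω) k * v (X ω) l * (Ψ ω - β₀ ⬝ᵥ v (X ω)) / g true ω)
            * ((if A ω = true then (1:ℝ) else 0) * Y ω))
          - 2 * ((v (X ω) k * v (X ω) l * (Ψ ω - β₀ ⬝ᵥ v (X ω)) * Qbar true ω / g true ω)
            * (if A ω = true then (1:ℝ) else 0))
          - 2 * ((v (X ω) k * v (X ω) l * (Ψ ω - β₀ ⬝ᵥ v (X ω)) / g false ω)
            * ((if A ω = false then (1:ℝ) else 0) * Y ω))
          + 2 * ((v (X ω) k * v (X ω) l * (Ψ ω - β₀ ⬝ᵥ v (X ω)) * Qbar false ω / g false ω)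
            * (if A ω = false then (1:ℝ) else 0))
          + (Ψ ω - β₀ ⬝ᵥ v (X ω)) ^ 2 * (v (X ω) k * v (X ω) l) := by
      intro ω
      rw [hΔstar ω, hQbarA ω]
      cases hA' : A ω <;> simp only [hA', Bool.false_eq_true, Bool.true_eq_false,
        if_true, if_false, ite_true, ite_false] <;> ring
    -- pointwise decomposition of the RHS
    have hpt2 : ∀ ω, (σ2A ω / gA ω ^ 2 + (Ψ ω - β₀ ⬝ᵥ v (X ω)) ^ 2) * (v (X ω) k * v (X ω) l)
        = (v (X ω) k * v (X ω) l * σ2 true ω / g true ω ^ 2)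
            * (if A ω = true then (1:ℝ) else 0)
          + (v (X ω) k * v (X ω) l * σ2 false ω / g false ω ^ 2)
            * (if A ω = false then (1:ℝ) else 0)
          + (Ψ ω - β₀ ⬝ᵥ v (X ω)) ^ 2 * (v (X ω) k * v (X ω) l) := by
      intro ω
      rw [hσ2A ω, hgA ω]
      cases hA' : A ω <;> simp only [hA', Bool.false_eq_true, Bool.true_eq_false,
        if_true, if_false, ite_true, ite_false] <;> ring
    calc ∫ ω, (Δstar ω + Ψ ω - β₀ ⬝ᵥ v (X ω)) ^ 2 * (v (X ω) k * v (X ω) l) ∂P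
        = ∫ ω, ((v (X ω) k * v (X ω) l / g true ω ^ 2)
            * ((if A ω = true then (1:ℝ) else 0) * (Y ω - Qbar true ω) ^ 2)
          + (v (X ω) k * v (X ω) l / g false ω ^ 2)
            * ((if A ω = false then (1:ℝ) else 0) * (Y ω - Qbar false ω) ^ 2)
          + 2 * ((v (X ω) k * v (X ω) l * (Ψ ω - β₀ ⬝ᵥ v (X ω)) / g true ω)
            * ((if A ω = true then (1:ℝ) else 0) * Y ω))
          - 2 * ((v (X ω) k * v (X ω) l * (Ψ ω - β₀ ⬝ᵥ v (X ω)) * Qbar true ω / g true ω)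
            * (if A ω = true then (1:ℝ) else 0))
          - 2 * ((v (X ω) k * v (X ω) l * (Ψ ω - β₀ ⬝ᵥ v (X ω)) / g false ω)
            * ((if A ω = false then (1:ℝ) else 0) * Y ω))
          + 2 * ((v (X ω) k * v (X ω) l * (Ψ ω - β₀ ⬝ᵥ v (X ω)) * Qbar false ω / g false ω)
            * (if A ω = false then (1:ℝ) else 0))
          + (Ψ ω - β₀ ⬝ᵥ v (X ω)) ^ 2 * (v (X ω) k * v (X ω) l)) ∂P :=
          integral_congr_ae (Filter.Eventually.of_forall hpt)
      _ = ∫ ω, ((v (X ω) k * v (X ω) l * σ2 true ω / g true ω ^ 2)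
            * (if A ω = true then (1:ℝ) else 0)
          + (v (X ω) k * v (X ω) l * σ2 false ω / g false ω ^ 2)
            * (if A ω = false then (1:ℝ) else 0)
          + (Ψ ω - β₀ ⬝ᵥ v (X ω)) ^ 2 * (v (X ω) k * v (X ω) l)) ∂P := by
          have e1 := aux_split7 I1 I2 (I3 true) (I4 true) (I3 false) (I4 false) I7
          have e2 := aux_split3 (I8 true) (I8 false) I7
          rw [Sa true, Sa false, Ba true, Ba false] at e1
          rw [Ta true, Ta false] at e2
          rw [e1, e2]
          ring
      _ = ∫ ω, (σ2A ω / gA ω ^ 2 + (Ψ ω - β₀ ⬝ᵥ v (X ω)) ^ 2) * (v (X ω) k * v (X ω) l) ∂P :=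
          (integral_congr_ae (Filter.Eventually.of_forall hpt2)).symm
  -- integrability for the matrix computation
  have hint : ∀ k l : Fin p, Integrable (fun ω =>
      (Δstar ω + Ψ ω - β₀ ⬝ᵥ v (X ω)) ^ 2 * (v (X ω) k * v (X ω) l)) P := fun k l =>
    aux_int ((((mΔ.add (hΨmX.mono hm le_rfl)).sub (hdotmX.mono hm le_rfl)).pow_const 2).mul
        (((hvmX k).mul (hvmX l)).mono hm le_rfl)).aestronglyMeasurable
      (aux_bdd_mul (aux_bdd_sq bc) (aux_bdd_mul (bv k) (bv l)))
  -- symmetry of G⁻¹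
  have hGT : Gᵀ = G := by
    rw [hG]
    ext a b
    simp only [Matrix.transpose_apply, Matrix.of_apply]
    exact integral_congr_ae (Filter.Eventually.of_forall fun ω => mul_comm _ _)
  have hinvsym : (G⁻¹)ᵀ = G⁻¹ := by rw [Matrix.transpose_nonsing_inv, hGT]
  have hsym : ∀ a b, G⁻¹ a b = G⁻¹ b a := by
    intro a b
    conv_lhs => rw [← hinvsym]
    rfl
  -- assemble
  ext i j
  simp only [Matrix.of_apply]
  have hD : ∀ ω, Dstar ω i * Dstar ω j
      = ∑ k, ∑ l, (G⁻¹ i k * G⁻¹ j l)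
          * ((Δstar ω + Ψ ω - β₀ ⬝ᵥ v (X ω)) ^ 2 * (v (X ω) k * v (X ω) l)) := by
    intro ω
    rw [hDstar ω]
    simp only [Matrix.mulVec, dotProduct]
    rw [Finset.sum_mul_sum]
    exact Finset.sum_congr rfl fun k _ => Finset.sum_congr rfl fun l _ => by ring
  calc ∫ ω, Dstar ω i * Dstar ω j ∂P
      = ∫ ω, ∑ k, ∑ l, (G⁻¹ i k * G⁻¹ j l)
          * ((Δstar ω + Ψ ω - β₀ ⬝ᵥ v (X ω)) ^ 2 * (v (X ω) k * v (X ω) l)) ∂P :=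
        integral_congr_ae (Filter.Eventually.of_forall hD)
    _ = ∑ k, ∑ l, (G⁻¹ i k * G⁻¹ j l)
          * ∫ ω, (Δstar ω + Ψ ω - β₀ ⬝ᵥ v (X ω)) ^ 2 * (v (X ω) k * v (X ω) l) ∂P := by
        rw [integral_finset_sum _ fun k _ =>
          integrable_finset_sum _ fun l _ => (hint k l).const_mul _]
        refine Finset.sum_congr rfl fun k _ => ?_
        rw [integral_finset_sum _ fun l _ => (hint k l).const_mul _]
        exact Finset.sum_congr rfl fun l _ => integral_const_mul _ _
    _ = (G⁻¹ * (Matrix.of fun i j =>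
          ∫ ω, (σ2A ω / gA ω ^ 2 + (Ψ ω - β₀ ⬝ᵥ v (X ω)) ^ 2) * (v (X ω) i * v (X ω) j) ∂P)
          * G⁻¹) i j := by
        simp only [Matrix.mul_apply, Matrix.of_apply, Finset.sum_mul]
        conv_rhs => rw [Finset.sum_comm]
        refine Finset.sum_congr rfl fun k _ => Finset.sum_congr rfl fun l _ => ?_
        rw [key k l, hsym l j]
        ring
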